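/- arXiv:2205.10923 — 2 statements merged into one kernel-verified Lean document; each statement's English description precedes it below -/
import Mathlib

section
/- Let X be a Poisson random variable with mean λ > 0, i.e. P(X = n) = e^{−λ} λⁿ / n! for every n ∈ ℕ. Then for every ε > 0, P(|X − λ| ≥ ε) ≤ 2 · exp(−ε² / (2(λ + ε))). Equivalently, the sum of e^{−λ} λⁿ / n! over all natural numbers n with |n − λ| ≥ ε is at most 2 · exp(−ε² / (2(λ + ε))). -/
open Real Set

private lemma chernoff_hasDeriv_f1 (x : ℝ) (hx : x < 1) :
    HasDerivAt (fun x : ℝ => -Real.log (1 - x) - x - x ^ 2 / 2)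
      ((1 - x)⁻¹ - 1 - x) x := by
  have h0 : (1:ℝ) - x ≠ 0 := by linarith
  have h1 : HasDerivAt (fun x : ℝ => 1 - x) (-1) x := by
    simpa using (hasDerivAt_id x).const_sub 1
  have h2 : HasDerivAt (fun x : ℝ => Real.log (1 - x)) ((1 - x)⁻¹ * (-1)) x :=
    (Real.hasDerivAt_log h0).comp x h1
  have h3 : HasDerivAt (fun x : ℝ => x ^ 2 / 2) (2 * x ^ 1 / 2) x :=
    (hasDerivAt_pow 2 x).div_const 2
  have := (h2.neg.sub (hasDerivAt_id x)).sub h3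
  refine this.congr_deriv ?_
  ring

private lemma chernoff_aux1 (u : ℝ) (h0 : 0 ≤ u) (h1 : u < 1) :
    u + u ^ 2 / 2 ≤ -Real.log (1 - u) := by
  set f : ℝ → ℝ := fun x => -Real.log (1 - x) - x - x ^ 2 / 2 with hf
  have key : MonotoneOn f (Set.Ico (0:ℝ) 1) := by
    apply monotoneOn_of_deriv_nonneg (convex_Ico 0 1)
    · intro x hx
      exact ((chernoff_hasDeriv_f1 x hx.2).continuousAt).continuousWithinAt
    · intro x hx
      rw [interior_Ico] at hx
      exact (chernoff_hasDeriv_f1 x hx.2).differentiableAt.differentiableWithinAt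
    · intro x hx
      rw [interior_Ico] at hx
      rw [(chernoff_hasDeriv_f1 x hx.2).deriv]
      have hx1 : 0 < 1 - x := by linarith [hx.2]
      have h := mul_inv_cancel₀ (ne_of_gt hx1)
      nlinarith [inv_pos.2 hx1, hx.1, mul_nonneg (mul_nonneg hx.1.le hx.1.le) (inv_pos.2 hx1).le]
  have h0' : f 0 ≤ f u := key (by constructor <;> norm_num) ⟨h0, h1⟩ h0
  simp only [hf] at h0'
  norm_num at h0'
  linarith

private lemma chernoff_hasDeriv_f2 (x : ℝ) (hx : x < 1) :
    HasDerivAt (fun x : ℝ => (1 - x) * Real.log (1 - x) + x - x ^ 2 / 2)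
      (-Real.log (1 - x) - x) x := by
  have h0 : (1:ℝ) - x ≠ 0 := by linarith
  have h1 : HasDerivAt (fun x : ℝ => 1 - x) (-1) x := by
    simpa using (hasDerivAt_id x).const_sub 1
  have h2 : HasDerivAt (fun x : ℝ => Real.log (1 - x)) ((1 - x)⁻¹ * (-1)) x :=
    (Real.hasDerivAt_log h0).comp x h1
  have h3 : HasDerivAt (fun x : ℝ => x ^ 2 / 2) (2 * x ^ 1 / 2) x :=
    (hasDerivAt_pow 2 x).div_const 2
  have := ((h1.mul h2).add (hasDerivAt_id x)).sub h3
  refine this.congr_deriv ?_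
  field_simp
  ring

private lemma chernoff_aux2 (v : ℝ) (h0 : 0 ≤ v) (h1 : v < 1) :
    v ^ 2 / 2 ≤ (1 - v) * Real.log (1 - v) + v := by
  set f : ℝ → ℝ := fun x => (1 - x) * Real.log (1 - x) + x - x ^ 2 / 2 with hf
  have key : MonotoneOn f (Set.Ico (0:ℝ) 1) := by
    apply monotoneOn_of_deriv_nonneg (convex_Ico 0 1)
    · intro x hx
      exact ((chernoff_hasDeriv_f2 x hx.2).continuousAt).continuousWithinAt
    · intro x hx
      rw [interior_Ico] at hx
      exact (chernoff_hasDeriv_f2 x hx.2).differentiableAt.differentiableWithinAt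
    · intro x hx
      rw [interior_Ico] at hx
      rw [(chernoff_hasDeriv_f2 x hx.2).deriv]
      have hx1 : 0 < 1 - x := by linarith [hx.2]
      have := Real.log_le_sub_one_of_pos hx1
      linarith
  have h0' : f 0 ≤ f v := key (by constructor <;> norm_num) ⟨h0, h1⟩ h0
  simp only [hf] at h0'
  norm_num at h0'
  linarith

private lemma chernoff_tail_bound (lam c q : ℝ) (hlam : 0 ≤ lam) (hc : 0 ≤ c) (hq : 0 ≤ q)
    (S : Set ℕ)
    (h : ∀ n ∈ S, Real.exp (-lam) * lam ^ n / (Nat.factorial n : ℝ)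
          ≤ c * (q ^ n / (Nat.factorial n : ℝ))) :
    ∑' n : S, Real.exp (-lam) * lam ^ (n : ℕ) / (Nat.factorial (n : ℕ) : ℝ)
      ≤ c * Real.exp q := by
  have hsum : Summable (fun n : ℕ => c * (q ^ n / (Nat.factorial n : ℝ))) :=
    (Real.summable_pow_div_factorial q).mul_left c
  set f : ℕ → ℝ := fun n => Real.exp (-lam) * lam ^ n / (Nat.factorial n : ℝ) with hfdef
  have hf_nonneg : ∀ n, 0 ≤ f n := fun n =>
    div_nonneg (mul_nonneg (Real.exp_pos _).le (pow_nonneg hlam n)) (Nat.cast_nonneg _)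
  have hle : ∀ n, S.indicator f n ≤ c * (q ^ n / (Nat.factorial n : ℝ)) := by
    intro n
    by_cases hn : n ∈ S
    · rw [Set.indicator_of_mem hn]; exact h n hn
    · rw [Set.indicator_of_notMem hn]; positivity
  have hind : Summable (S.indicator f) :=
    Summable.of_nonneg_of_le (fun n => Set.indicator_nonneg (fun a _ => hf_nonneg a) n) hle hsum
  calc ∑' n : S, f n = ∑' n, S.indicator f n := tsum_subtype S f
    _ ≤ ∑' n, c * (q ^ n / (Nat.factorial n : ℝ)) := Summable.tsum_le_tsum hle hind hsum
    _ = c * ∑' n, q ^ n / (Nat.factorial n : ℝ) := tsum_mul_left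
    _ = c * Real.exp q := by
        rw [Real.exp_eq_exp_ℝ, NormedSpace.exp_eq_tsum_div]

private lemma chernoff_upper (lam ε : ℝ) (hlam : 0 < lam) (hε : 0 < ε) :
    ∑' n : {n : ℕ | lam + ε ≤ (n : ℝ)},
        Real.exp (-lam) * lam ^ (n : ℕ) / (Nat.factorial (n : ℕ) : ℝ)
      ≤ Real.exp (-(ε ^ 2) / (2 * (lam + ε))) := by
  set t := Real.log ((lam + ε) / lam) with ht
  have hratio : (1:ℝ) ≤ (lam + ε) / lam := by
    rw [le_div_iff₀ hlam]; linarith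
  have ht0 : 0 ≤ t := Real.log_nonneg hratio
  have hexp_t : Real.exp t = (lam + ε) / lam := Real.exp_log (by positivity)
  have key : lam * Real.exp t = lam + ε := by
    rw [hexp_t]; field_simp
  set c := Real.exp (-(t * (lam + ε)) - lam) with hc
  have hmain : ∑' n : {n : ℕ | lam + ε ≤ (n : ℝ)},
      Real.exp (-lam) * lam ^ (n : ℕ) / (Nat.factorial (n : ℕ) : ℝ)
      ≤ c * Real.exp (lam + ε) := by
    apply chernoff_tail_bound lam c (lam + ε) hlam.le (Real.exp_pos _).le (by linarith)
    intro n hn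
    have hn' : lam + ε ≤ (n : ℝ) := hn
    have hfn : (0:ℝ) < (Nat.factorial n : ℝ) := by positivity
    have h2 : c * ((lam + ε) ^ n / (Nat.factorial n : ℝ))
        = (c * Real.exp t ^ n) * lam ^ n / (Nat.factorial n : ℝ) := by
      rw [← key, mul_pow]; ring
    rw [h2, div_le_div_iff_of_pos_right hfn]
    apply mul_le_mul_of_nonneg_right _ (pow_nonneg hlam.le n)
    rw [← Real.exp_nat_mul, hc, ← Real.exp_add]
    apply Real.exp_le_exp.2
    nlinarith
  refine hmain.trans ?_
  rw [hc, ← Real.exp_add]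
  apply Real.exp_le_exp.2
  -- need : -(t*(lam+ε)) - lam + (lam + ε) ≤ -(ε^2)/(2*(lam+ε))
  set u := ε / (lam + ε) with hu
  have hu0 : 0 ≤ u := by positivity
  have hu1 : u < 1 := by
    rw [hu, div_lt_one (by linarith)]; linarith
  have haux := chernoff_aux1 u hu0 hu1
  have h1u : 1 - u = lam / (lam + ε) := by
    rw [hu]; field_simp; ring
  have hlog : -Real.log (1 - u) = t := by
    rw [h1u, ht, ← Real.log_inv]
    congr 1
    rw [inv_div]
  rw [hlog] at haux
  -- haux : u + u^2/2 ≤ t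
  have hue : u * (lam + ε) = ε := by
    rw [hu]; field_simp
  have hpos : (0:ℝ) < lam + ε := by linarith
  have hdouble := mul_le_mul_of_nonneg_right (mul_le_mul_of_nonneg_right haux hpos.le) hpos.le
  have h3 : u * (lam + ε) * (lam + ε) = ε * (lam + ε) := by rw [hue]
  have h4 : u ^ 2 * (lam + ε) ^ 2 = ε ^ 2 := by rw [← mul_pow, hue]
  rw [le_div_iff₀ (by linarith : (0:ℝ) < 2 * (lam + ε))]
  nlinarith [hdouble, h3, h4]

private lemma chernoff_lower (lam ε : ℝ) (hlam : 0 < lam) (hε : 0 < ε) :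
    ∑' n : {n : ℕ | (n : ℝ) ≤ lam - ε},
        Real.exp (-lam) * lam ^ (n : ℕ) / (Nat.factorial (n : ℕ) : ℝ)
      ≤ Real.exp (-(ε ^ 2) / (2 * (lam + ε))) := by
  by_cases hεl : ε < lam
  · -- Chernoff with t = log((lam-ε)/lam) < 0
    set t := Real.log ((lam - ε) / lam) with ht
    have hq : (0:ℝ) < lam - ε := by linarith
    have hexp_t : Real.exp t = (lam - ε) / lam := Real.exp_log (by positivity)
    have ht0 : t ≤ 0 := by
      apply Real.log_nonpos (by positivity)
      rw [div_le_one hlam]; linarith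
    have key : lam * Real.exp t = lam - ε := by
      rw [hexp_t]; field_simp
    set c := Real.exp (-(t * (lam - ε)) - lam) with hc
    have hmain : ∑' n : {n : ℕ | (n : ℝ) ≤ lam - ε},
        Real.exp (-lam) * lam ^ (n : ℕ) / (Nat.factorial (n : ℕ) : ℝ)
        ≤ c * Real.exp (lam - ε) := by
      apply chernoff_tail_bound lam c (lam - ε) hlam.le (Real.exp_pos _).le hq.le
      intro n hn
      have hn' : (n : ℝ) ≤ lam - ε := hn
      have hfn : (0:ℝ) < (Nat.factorial n : ℝ) := by positivity
      have h2 : c * ((lam - ε) ^ n / (Nat.factorial n : ℝ))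
          = (c * Real.exp t ^ n) * lam ^ n / (Nat.factorial n : ℝ) := by
        rw [← key, mul_pow]; ring
      rw [h2, div_le_div_iff_of_pos_right hfn]
      apply mul_le_mul_of_nonneg_right _ (pow_nonneg hlam.le n)
      rw [← Real.exp_nat_mul, hc, ← Real.exp_add]
      apply Real.exp_le_exp.2
      nlinarith
    refine hmain.trans ?_
    rw [hc, ← Real.exp_add]
    apply Real.exp_le_exp.2
    -- need : -(t*(lam-ε)) - lam + (lam - ε) ≤ -(ε^2)/(2*(lam+ε))
    set v := ε / lam with hv
    have hv0 : 0 ≤ v := by positivity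
    have hv1 : v < 1 := by rw [hv, div_lt_one hlam]; exact hεl
    have haux := chernoff_aux2 v hv0 hv1
    have h1v : 1 - v = (lam - ε) / lam := by
      rw [hv]; field_simp
    rw [h1v, ← ht] at haux
    -- haux : v^2/2 ≤ (1-v) * t + v  with (1-v) = (lam-ε)/lam
    have hve : v * lam = ε := by rw [hv]; field_simp
    have h1vt : (1 - v) * lam = lam - ε := by
      rw [h1v]; field_simp
    -- so lam * ((1-v)*t + v) = (lam-ε)*t + ε  and lam * v^2/2 = ε^2/(2 lam)
    have step1 : -(t * (lam - ε)) - lam + (lam - ε) ≤ -(ε ^ 2) / (2 * lam) := by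
      rw [hv] at haux
      have this2 := mul_le_mul_of_nonneg_left haux hlam.le
      have e1 : lam * ((lam - ε) / lam * t + ε / lam) = t * (lam - ε) + ε := by
        field_simp
      have e2 : lam * ((ε / lam) ^ 2 / 2) = ε ^ 2 / (2 * lam) := by
        field_simp
      rw [e1, e2] at this2
      have e3 : -(ε ^ 2) / (2 * lam) = -(ε ^ 2 / (2 * lam)) := by ring
      rw [e3]
      linarith
    refine step1.trans ?_
    rw [div_le_div_iff₀ (by linarith) (by linarith)]
    nlinarith
  · -- ε ≥ lam : the set is contained in {0} and only nonempty if lam = ε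
    push_neg at hεl
    have hmain := chernoff_tail_bound lam (Real.exp (-(ε ^ 2) / (2 * (lam + ε)))) 0 hlam.le
      (Real.exp_pos _).le le_rfl {n : ℕ | (n : ℝ) ≤ lam - ε} ?_
    · rw [Real.exp_zero, mul_one] at hmain
      exact hmain
    intro n hn
    have hn' : (n : ℝ) ≤ lam - ε := hn
    have hn0 : n = 0 := by
      by_contra h
      have : (1:ℝ) ≤ (n:ℝ) := by exact_mod_cast Nat.one_le_iff_ne_zero.2 h
      linarith
    subst hn0
    have hle : lam = ε := by
      have : (0:ℝ) ≤ lam - ε := by exact_mod_cast hn'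
      linarith
    subst hle
    norm_num [Nat.factorial]
    have e4 : -lam ^ 2 / (2 * (lam + lam)) = -(lam / 4) := by
      field_simp; ring
    rw [e4]
    linarith

/-- **Chernoff-type bound for Poisson random variables.** If `X` is Poisson with mean
`λ > 0`, i.e. `P(X = n) = e^{-λ} λ^n / n!`, then for every `ε > 0`,
`P(|X - λ| ≥ ε) ≤ 2 exp(-ε² / (2(λ + ε)))`; equivalently, the sum of `e^{-λ} λ^n / n!`
over all natural numbers `n` with `|n - λ| ≥ ε` is at most `2 exp(-ε² / (2(λ + ε)))`. -/
theorem poisson_chernoff (lam : ℝ) (hlam : 0 < lam) (ε : ℝ) (hε : 0 < ε) :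
    ∑' n : {n : ℕ // ε ≤ |(n : ℝ) - lam|},
        Real.exp (-lam) * lam ^ (n : ℕ) / (Nat.factorial (n : ℕ) : ℝ)
      ≤ 2 * Real.exp (-(ε ^ 2) / (2 * (lam + ε))) := by
  set f : ℕ → ℝ := fun n => Real.exp (-lam) * lam ^ n / (Nat.factorial n : ℝ) with hfdef
  set S : Set ℕ := {n : ℕ | ε ≤ |(n : ℝ) - lam|} with hS
  set A : Set ℕ := {n : ℕ | lam + ε ≤ (n : ℝ)} with hA
  set B : Set ℕ := {n : ℕ | (n : ℝ) ≤ lam - ε} with hB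
  have hunion : S = A ∪ B := by
    ext n
    simp only [hS, hA, hB, Set.mem_setOf_eq, Set.mem_union, le_abs]
    constructor
    · rintro (h | h)
      · left; linarith
      · right; linarith
    · rintro (h | h)
      · left; linarith
      · right; linarith
  have hdisj : Disjoint A B := by
    rw [Set.disjoint_left]
    intro n hnA hnB
    simp only [hA, Set.mem_setOf_eq] at hnA
    simp only [hB, Set.mem_setOf_eq] at hnB
    linarith
  have hf_nonneg : ∀ n, 0 ≤ f n := fun n =>
    div_nonneg (mul_nonneg (Real.exp_pos _).le (pow_nonneg hlam.le n)) (Nat.cast_nonneg _)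
  have hfsum : Summable f := by
    have := (Real.summable_pow_div_factorial lam).mul_left (Real.exp (-lam))
    apply this.congr
    intro n
    simp [hfdef, mul_div_assoc]
  have hsub : ∀ T : Set ℕ, Summable (T.indicator f) := fun T => hfsum.indicator T
  have hsplit : ∑' n : S, f n = (∑' n : A, f n) + ∑' n : B, f n := by
    rw [tsum_subtype S f, tsum_subtype A f, tsum_subtype B f, hunion,
      Set.indicator_union_of_disjoint hdisj]
    exact Summable.tsum_add (hsub A) (hsub B)
  have hcoe : (∑' n : {n : ℕ // ε ≤ |(n : ℝ) - lam|}, f (n : ℕ)) = ∑' n : S, f (n : ℕ) := rfl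
  rw [hcoe, hsplit]
  have h1 := chernoff_upper lam ε hlam hε
  have h2 := chernoff_lower lam ε hlam hε
  calc (∑' n : A, f n) + ∑' n : B, f n
      ≤ Real.exp (-(ε ^ 2) / (2 * (lam + ε))) + Real.exp (-(ε ^ 2) / (2 * (lam + ε))) :=
        add_le_add h1 h2
    _ = 2 * Real.exp (-(ε ^ 2) / (2 * (lam + ε))) := by ring
end

section
/- Let I be a countable type, and let p : I → ℝ≥0 and p_k : I → ℝ≥0 for k ∈ ℕ be functions satisfying ∑_{x ∈ I} p(x) = 1 and ∑_{x ∈ I} p_k(x) = 1 for every k. Suppose that for every x ∈ I one has p(x) ≤ liminf_{k → ∞} p_k(x). Then for every x ∈ I, p_k(x) → p(x) as k → ∞. -/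
open Filter

/-- **Fatou-type upgrade for probability mass functions.** If `p` and `p_k`, `k ∈ ℕ`, are
probability mass functions on a countable type `I` and `p x ≤ liminf_k p_k x` for every
`x ∈ I`, then `p_k x → p x` for every `x ∈ I`. -/
theorem pmf_tendsto_of_le_liminf {I : Type*} [Countable I]
    (p : I → NNReal) (pk : ℕ → I → NNReal)
    (hp : ∑' x, p x = 1) (hpk : ∀ k, ∑' x, pk k x = 1)
    (hliminf : ∀ x, (p x : ℝ) ≤ liminf (fun k => (pk k x : ℝ)) atTop) :
    ∀ x, Tendsto (fun k => (pk k x : ℝ)) atTop (nhds (p x)) := by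
  classical
  -- summability
  have hSk : ∀ k, Summable (pk k) := by
    intro k
    by_contra h
    have := hpk k
    rw [tsum_eq_zero_of_not_summable h] at this
    exact one_ne_zero this.symm
  have hSp : Summable p := by
    by_contra h
    rw [tsum_eq_zero_of_not_summable h] at hp
    exact one_ne_zero hp.symm
  have hSpR : Summable fun y => (p y : ℝ) := NNReal.summable_coe.2 hSp
  have hpR : ∑' y, (p y : ℝ) = 1 := by
    rw [← NNReal.coe_tsum, hp, NNReal.coe_one]
  -- partial sums of pk are ≤ 1
  have hpartial : ∀ k (s : Finset I), ∑ y ∈ s, (pk k y : ℝ) ≤ 1 := by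
    intro k s
    have := Summable.sum_le_tsum s (fun y _ => zero_le) (hSk k)
    have : (∑ y ∈ s, pk k y : NNReal) ≤ 1 := by rw [← hpk k]; exact this
    calc ∑ y ∈ s, (pk k y : ℝ) = ((∑ y ∈ s, pk k y : NNReal) : ℝ) := by
          rw [NNReal.coe_sum]
      _ ≤ 1 := by exact_mod_cast this
  have hbdd_above : ∀ (t : Finset I),
      IsBoundedUnder (· ≤ ·) atTop (fun k => ∑ y ∈ t, (pk k y : ℝ)) :=
    fun t => isBoundedUnder_of ⟨1, fun k => hpartial k t⟩
  have hbdd_below : ∀ (t : Finset I),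
      IsBoundedUnder (· ≥ ·) atTop (fun k => ∑ y ∈ t, (pk k y : ℝ)) :=
    fun t => isBoundedUnder_of ⟨0, fun k =>
      Finset.sum_nonneg fun y _ => (pk k y).coe_nonneg⟩
  have hbdd_above1 : ∀ z, IsBoundedUnder (· ≤ ·) atTop (fun k => (pk k z : ℝ)) := by
    intro z
    have := hbdd_above {z}
    simpa using this
  have hbdd_below1 : ∀ z, IsBoundedUnder (· ≥ ·) atTop (fun k => (pk k z : ℝ)) :=
    fun z => isBoundedUnder_of ⟨0, fun k => (pk k z).coe_nonneg⟩
  -- Fatou for finite sums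
  have hfatou : ∀ (t : Finset I),
      (∑ y ∈ t, (p y : ℝ)) ≤ liminf (fun k => ∑ y ∈ t, (pk k y : ℝ)) atTop := by
    intro t
    induction t using Finset.cons_induction with
    | empty => simp [liminf_const]
    | cons a t ha ih =>
      rw [Finset.sum_cons]
      have key := le_liminf_add (u := fun k => (pk k a : ℝ))
        (v := fun k => ∑ y ∈ t, (pk k y : ℝ)) (f := atTop)
        (hbdd_below1 a) (hbdd_above1 a) (hbdd_below t)
        ((hbdd_above t).isCoboundedUnder_ge)
      calc (p a : ℝ) + ∑ y ∈ t, (p y : ℝ)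
          ≤ liminf (fun k => (pk k a : ℝ)) atTop
            + liminf (fun k => ∑ y ∈ t, (pk k y : ℝ)) atTop :=
            add_le_add (hliminf a) ih
        _ ≤ liminf ((fun k => (pk k a : ℝ)) + fun k => ∑ y ∈ t, (pk k y : ℝ)) atTop := key
        _ = liminf (fun k => ∑ y ∈ Finset.cons a t ha, (pk k y : ℝ)) atTop := by
            congr 1
            funext k
            rw [Pi.add_apply, Finset.sum_cons]
  intro x
  refine tendsto_of_le_liminf_of_limsup_le (hliminf x) ?_ (hbdd_above1 x) (hbdd_below1 x)
  -- limsup pk x ≤ p x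
  refine le_of_forall_pos_le_add fun ε hε => ?_
  -- choose a finite set t avoiding x carrying most of the mass of p away from x
  set f : I → ℝ := fun y => if y = x then 0 else (p y : ℝ) with hf
  have hSf : Summable f := by
    apply hSpR.summable_of_eq_zero_or_self
    intro y
    by_cases h : y = x <;> simp [hf, h]
  have hfsum : ∑' y, f y = 1 - (p x : ℝ) := by
    have := Summable.tsum_eq_add_tsum_ite hSpR x
    rw [hpR] at this
    have : (1 : ℝ) - (p x : ℝ) = ∑' y, ite (y = x) 0 ((p y : ℝ)) := by linarith
    rw [this]
  have hex : ∃ s : Finset I, 1 - (p x : ℝ) - ε < ∑ y ∈ s, f y := by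
    have h1 : (1 : ℝ) - (p x : ℝ) - ε < ∑' y, f y := by rw [hfsum]; linarith
    have := hSf.hasSum.eventually (lt_mem_nhds h1)
    exact this.exists
  obtain ⟨s, hs⟩ := hex
  set t : Finset I := s.erase x with ht
  have hxt : x ∉ t := Finset.notMem_erase x s
  have hts : 1 - (p x : ℝ) - ε < ∑ y ∈ t, (p y : ℝ) := by
    refine lt_of_lt_of_le hs (le_of_eq ?_)
    calc ∑ y ∈ s, f y = ∑ y ∈ s.erase x, f y :=
          (Finset.sum_erase s (show f x = 0 by simp [hf])).symm
      _ = ∑ y ∈ t, (p y : ℝ) := Finset.sum_congr rfl fun y hy => by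
          have : y ≠ x := Finset.ne_of_mem_erase hy
          simp [hf, this]
  -- pointwise bound : pk k x ≤ 1 - ∑_{y ∈ t} pk k y
  have hbound : ∀ k, (pk k x : ℝ) ≤ 1 - ∑ y ∈ t, (pk k y : ℝ) := by
    intro k
    have := hpartial k (insert x t)
    rw [Finset.sum_insert hxt] at this
    linarith
  calc limsup (fun k => (pk k x : ℝ)) atTop
      ≤ limsup (fun k => 1 - ∑ y ∈ t, (pk k y : ℝ)) atTop :=
        limsup_le_limsup (Eventually.of_forall hbound)
          ((hbdd_below1 x).isCoboundedUnder_le)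
          (isBoundedUnder_of ⟨1, fun k => by
            have := Finset.sum_nonneg (fun y (_ : y ∈ t) => (pk k y).coe_nonneg)
            linarith⟩)
    _ = 1 - liminf (fun k => ∑ y ∈ t, (pk k y : ℝ)) atTop :=
        limsup_const_sub atTop _ 1 ((hbdd_above t).isCoboundedUnder_ge) (hbdd_below t)
    _ ≤ 1 - ∑ y ∈ t, (p y : ℝ) := by linarith [hfatou t]
    _ ≤ (p x : ℝ) + ε := by linarith
end
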